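/- Let $n = 2p+1$ be odd with $p \geq 2$ and $\alpha_m$ the Fourier coefficients of $g(x) = 1 - x/(2\pi)$ as above. Then the sequence of odd-indexed coefficients is strictly decreasing: $\alpha_1 > \alpha_3 > \alpha_5 > \cdots$, and each even-indexed coefficient satisfies $\alpha_{2r} \leq \alpha_{2r-1}$ for all $r = 1, \ldots, \lfloor p/2 \rfloor$. In particular $\alpha_1 \geq \alpha_m$ for all $m = 2, \ldots, p$. -/

import Mathlib

open Finset Real

/-- Ordering of the discrete Fourier coefficients of `g(x) = 1 - x/(2π)`:
odd-indexed coefficients strictly decrease, each even-indexed one is dominated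
by the previous odd-indexed one, and `α₁` dominates all `α_m`, `2 ≤ m ≤ p`. -/
theorem stmt10 (p : ℕ) (hp : 2 ≤ p) (α : ℕ → ℝ)
    (hαodd : ∀ m, Odd m → α m = Real.cos (m * π / (2 * (2 * p + 1))) ^ 2 /
        ((2 * p + 1) * Real.sin (π * m / (2 * p + 1)) ^ 2))
    (hαeven : ∀ m, Even m → α m = Real.sin (m * π / (2 * (2 * p + 1))) ^ 2 /
        ((2 * p + 1) * Real.sin (π * m / (2 * p + 1)) ^ 2)) :
    (∀ m₁ m₂ : ℕ, Odd m₁ → Odd m₂ → 1 ≤ m₁ → m₁ < m₂ → m₂ ≤ p → α m₂ < α m₁) ∧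
    (∀ r : ℕ, 1 ≤ r → r ≤ p / 2 → α (2 * r) ≤ α (2 * r - 1)) ∧
    (∀ m : ℕ, 2 ≤ m → m ≤ p → α m ≤ α 1) := by
  have hπ := Real.pi_pos
  have hN : (0:ℝ) < 2 * (p:ℝ) + 1 := by positivity
  -- bounds on θ m = m π / (2(2p+1))
  have hθ : ∀ m : ℕ, 1 ≤ m → m ≤ 2 * p →
      0 < (m:ℝ) * π / (2 * (2 * (p:ℝ) + 1)) ∧
        (m:ℝ) * π / (2 * (2 * (p:ℝ) + 1)) < π / 2 := by
    intro m h1 h2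
    have hm1 : (1:ℝ) ≤ (m:ℝ) := by exact_mod_cast h1
    have hm2 : (m:ℝ) ≤ 2 * (p:ℝ) := by exact_mod_cast h2
    constructor
    · apply div_pos (by nlinarith) (by positivity)
    · rw [div_lt_div_iff₀ (by positivity) two_pos]
      nlinarith
  have hsin : ∀ m : ℕ, 1 ≤ m → m ≤ 2 * p →
      0 < Real.sin ((m:ℝ) * π / (2 * (2 * (p:ℝ) + 1))) := by
    intro m h1 h2
    obtain ⟨ha, hb⟩ := hθ m h1 h2
    exact Real.sin_pos_of_pos_of_lt_pi ha (by linarith)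
  have hcos : ∀ m : ℕ, 1 ≤ m → m ≤ 2 * p →
      0 < Real.cos ((m:ℝ) * π / (2 * (2 * (p:ℝ) + 1))) := by
    intro m h1 h2
    obtain ⟨ha, hb⟩ := hθ m h1 h2
    exact Real.cos_pos_of_mem_Ioo ⟨by linarith, hb⟩
  have harg : ∀ m : ℕ, π * (m:ℝ) / (2 * (p:ℝ) + 1)
      = 2 * ((m:ℝ) * π / (2 * (2 * (p:ℝ) + 1))) := by
    intro m; field_simp
  have key_odd : ∀ m : ℕ, Odd m → 1 ≤ m → m ≤ 2 * p →
      α m = 1 / (4 * (2 * (p:ℝ) + 1) *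
        Real.sin ((m:ℝ) * π / (2 * (2 * (p:ℝ) + 1))) ^ 2) := by
    intro m ho h1 h2
    have hs : Real.sin ((m:ℝ) * π / (2 * (2 * (p:ℝ) + 1))) ≠ 0 := (hsin m h1 h2).ne'
    have hc : Real.cos ((m:ℝ) * π / (2 * (2 * (p:ℝ) + 1))) ≠ 0 := (hcos m h1 h2).ne'
    have hN' : (2 * (p:ℝ) + 1) ≠ 0 := hN.ne'
    rw [hαodd m ho, harg m, Real.sin_two_mul]
    field_simp
    ring
  have key_even : ∀ m : ℕ, Even m → 1 ≤ m → m ≤ 2 * p →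
      α m = 1 / (4 * (2 * (p:ℝ) + 1) *
        Real.cos ((m:ℝ) * π / (2 * (2 * (p:ℝ) + 1))) ^ 2) := by
    intro m he h1 h2
    have hs : Real.sin ((m:ℝ) * π / (2 * (2 * (p:ℝ) + 1))) ≠ 0 := (hsin m h1 h2).ne'
    have hc : Real.cos ((m:ℝ) * π / (2 * (2 * (p:ℝ) + 1))) ≠ 0 := (hcos m h1 h2).ne'
    have hN' : (2 * (p:ℝ) + 1) ≠ 0 := hN.ne'
    rw [hαeven m he, harg m, Real.sin_two_mul]
    field_simp
    ring
  -- Part 1: odd-indexed coefficients strictly decrease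
  have part1 : ∀ m₁ m₂ : ℕ, Odd m₁ → Odd m₂ → 1 ≤ m₁ → m₁ < m₂ → m₂ ≤ p → α m₂ < α m₁ := by
    intro m₁ m₂ ho₁ ho₂ h1 hlt hle
    have h1p : m₁ ≤ 2 * p := by omega
    have h2p : m₂ ≤ 2 * p := by omega
    rw [key_odd m₁ ho₁ h1 h1p, key_odd m₂ ho₂ (by omega) h2p]
    obtain ⟨ha0, ha1⟩ := hθ m₁ h1 h1p
    obtain ⟨hb0, hb1⟩ := hθ m₂ (by omega) h2p
    have hsa := hsin m₁ h1 h1p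
    have hmm : (m₁:ℝ) < (m₂:ℝ) := by exact_mod_cast hlt
    have hθlt : (m₁:ℝ) * π / (2 * (2 * (p:ℝ) + 1))
        < (m₂:ℝ) * π / (2 * (2 * (p:ℝ) + 1)) := by
      apply div_lt_div_of_pos_right (by nlinarith) (by positivity)
    have hss := Real.sin_lt_sin_of_lt_of_le_pi_div_two (by linarith) (le_of_lt hb1) hθlt
    apply one_div_lt_one_div_of_lt
    · positivity
    · have hsq : Real.sin ((m₁:ℝ) * π / (2 * (2 * (p:ℝ) + 1))) ^ 2
          < Real.sin ((m₂:ℝ) * π / (2 * (2 * (p:ℝ) + 1))) ^ 2 := by nlinarith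
      exact mul_lt_mul_of_pos_left hsq (by positivity)
  -- even vs odd comparison
  have hcmp : ∀ a b : ℕ, Odd a → Even b → 1 ≤ a → a ≤ 2 * p → 1 ≤ b → b ≤ 2 * p →
      a + b ≤ 2 * p + 1 → α b ≤ α a := by
    intro a b ha he ha1 ha2 hb1 hb2 hab
    rw [key_odd a ha ha1 ha2, key_even b he hb1 hb2]
    obtain ⟨hA0, hA1⟩ := hθ a ha1 ha2
    obtain ⟨hB0, hB1⟩ := hθ b hb1 hb2
    have hsa := hsin a ha1 ha2
    have habR : (a:ℝ) + (b:ℝ) ≤ 2 * (p:ℝ) + 1 := by exact_mod_cast hab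
    have hsum : (a:ℝ) * π / (2 * (2 * (p:ℝ) + 1)) + (b:ℝ) * π / (2 * (2 * (p:ℝ) + 1))
        ≤ π / 2 := by
      rw [← add_div, div_le_div_iff₀ (by positivity) two_pos]
      nlinarith
    have hsc : Real.sin ((a:ℝ) * π / (2 * (2 * (p:ℝ) + 1)))
        ≤ Real.cos ((b:ℝ) * π / (2 * (2 * (p:ℝ) + 1))) := by
      rw [← Real.cos_pi_div_two_sub]
      exact Real.cos_le_cos_of_nonneg_of_le_pi hB0.le (by linarith) (by linarith)
    apply one_div_le_one_div_of_le
    · positivity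
    · exact mul_le_mul_of_nonneg_left (pow_le_pow_left₀ hsa.le hsc 2) (by positivity)
  refine ⟨part1, ?_, ?_⟩
  · intro r hr1 hr2
    have h2r : 2 * r ≤ p := by omega
    exact hcmp (2 * r - 1) (2 * r) (Nat.odd_iff.mpr (by omega)) (Nat.even_iff.mpr (by omega))
      (by omega) (by omega) (by omega) (by omega) (by omega)
  · intro m h2 hle
    rcases Nat.even_or_odd m with he | ho
    · exact hcmp 1 m odd_one he le_rfl (by omega) (by omega) (by omega) (by omega)
    · exact (part1 1 m odd_one ho le_rfl (by omega) hle).le
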